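/- Let K be a spherical convex body contained in the open upper hemisphere whose spherical polar K* is contained in the open lower hemisphere. If g is the gnomonic projection centered at e_{d+1} and g̃ is the gnomonic projection centered at −e_{d+1}, then the Euclidean polar body of g(K) equals g̃(K*), i.e. g(K)° = g̃(K*). -/

import Mathlib

open Metric Set
noncomputable section

def eLast (d : ℕ) : EuclideanSpace ℝ (Fin (d + 1)) := EuclideanSpace.single (Fin.last d) 1

/-- Open upper hemisphere. -/
def upperHemi (d : ℕ) : Set (EuclideanSpace ℝ (Fin (d + 1))) :=
  {x | x ∈ sphere (0 : EuclideanSpace ℝ (Fin (d + 1))) 1 ∧ 0 < x (Fin.last d)}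

/-- Open lower hemisphere. -/
def lowerHemi (d : ℕ) : Set (EuclideanSpace ℝ (Fin (d + 1))) :=
  {x | x ∈ sphere (0 : EuclideanSpace ℝ (Fin (d + 1))) 1 ∧ x (Fin.last d) < 0}

/-- Gnomonic projection centered at `e_{d+1}`, in coordinates of `ℝ^d = e_{d+1}^⊥`:
`g(x) = x/⟨x,e_{d+1}⟩ − e_{d+1}` has coordinates `x_i/x_{d+1}`. -/
def gproj (d : ℕ) (x : EuclideanSpace ℝ (Fin (d + 1))) : EuclideanSpace ℝ (Fin d) :=
  WithLp.toLp 2 (fun i : Fin d => x i.castSucc / x (Fin.last d))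

/-- Gnomonic projection centered at `−e_{d+1}`, in coordinates of `ℝ^d = e_{d+1}^⊥`:
`g̃(x) = x/⟨x,−e_{d+1}⟩ + e_{d+1}` has coordinates `x_i/(−x_{d+1})`. -/
def gtproj (d : ℕ) (x : EuclideanSpace ℝ (Fin (d + 1))) : EuclideanSpace ℝ (Fin d) :=
  WithLp.toLp 2 (fun i : Fin d => x i.castSucc / (-x (Fin.last d)))

/-- Geodesic segment on the sphere. -/
def sphSeg {d : ℕ} (x y : EuclideanSpace ℝ (Fin (d + 1))) :
    Set (EuclideanSpace ℝ (Fin (d + 1))) :=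
  {z | ∃ a b : ℝ, 0 ≤ a ∧ 0 ≤ b ∧ 0 < a + b ∧ z = ‖a • x + b • y‖⁻¹ • (a • x + b • y)}

/-- Spherical convexity. -/
def SphConvex {d : ℕ} (K : Set (EuclideanSpace ℝ (Fin (d + 1)))) : Prop :=
  ∀ x ∈ K, ∀ y ∈ K, sphSeg x y ⊆ K

/-- The spherical polar body. -/
def sPolar {d : ℕ} (K : Set (EuclideanSpace ℝ (Fin (d + 1)))) :
    Set (EuclideanSpace ℝ (Fin (d + 1))) :=
  {x ∈ sphere (0 : EuclideanSpace ℝ (Fin (d + 1))) 1 | ∀ z ∈ K, (inner ℝ x z : ℝ) ≤ 0}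

/-- The Euclidean polar `L° = {y : ⟨y,x⟩ ≤ 1 ∀ x ∈ L}`. -/
def ePolar {d : ℕ} (L : Set (EuclideanSpace ℝ (Fin d))) : Set (EuclideanSpace ℝ (Fin d)) :=
  {y | ∀ x ∈ L, (inner ℝ x y : ℝ) ≤ 1}

lemma inner_euclid {n : ℕ} (x y : EuclideanSpace ℝ (Fin n)) :
    (inner ℝ x y : ℝ) = ∑ i, x i * y i := by
  simp [PiLp.inner_apply, RCLike.inner_apply, mul_comm]

lemma norm_sq_euclid {n : ℕ} (x : EuclideanSpace ℝ (Fin n)) :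
    ‖x‖ ^ 2 = ∑ i, x i ^ 2 := by
  rw [EuclideanSpace.norm_eq, Real.sq_sqrt (by positivity)]
  simp [Real.norm_eq_abs, sq_abs]

lemma norm_snoc_eq_one {d : ℕ} (y : EuclideanSpace ℝ (Fin d)) (s : ℝ) (hs0 : 0 < s)
    (hs2 : s ^ 2 = 1 + ‖y‖ ^ 2) (u : EuclideanSpace ℝ (Fin (d + 1)))
    (h1 : ∀ i : Fin d, u i.castSucc = y i / s) (h2 : u (Fin.last d) = -1 / s) : ‖u‖ = 1 := by
  have h : ‖u‖ ^ 2 = 1 := by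
    rw [norm_sq_euclid, Fin.sum_univ_castSucc, h2]
    have : ∀ i : Fin d, u i.castSucc ^ 2 = y i ^ 2 / s ^ 2 := fun i => by rw [h1 i, div_pow]
    rw [Finset.sum_congr rfl fun i _ => this i, ← Finset.sum_div, ← norm_sq_euclid,
      neg_div, neg_sq, div_pow, one_pow, ← add_div, hs2, add_comm,
      div_self (by positivity)]
  nlinarith [norm_nonneg u]

/-- For a spherical convex body `K` in the open upper hemisphere whose spherical polar lies
in the open lower hemisphere, the Euclidean polar of `g(K)` equals `g̃(K*)`. -/
theorem polar_gnomonic (d : ℕ) (K : Set (EuclideanSpace ℝ (Fin (d + 1))))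
    (hK : K ⊆ upperHemi d) (hKc : IsCompact K) (hKne : K.Nonempty) (hKconv : SphConvex K)
    (hpol : sPolar K ⊆ lowerHemi d) :
    ePolar (gproj d '' K) = gtproj d '' sPolar K := by
  ext y
  simp only [ePolar, mem_setOf_eq, mem_image]
  constructor
  · intro hy
    have hy' : ∀ z ∈ K, (inner ℝ (gproj d z) y : ℝ) ≤ 1 := fun z hz =>
      hy _ (mem_image_of_mem _ hz)
    set s : ℝ := Real.sqrt (1 + ‖y‖ ^ 2) with hs
    have hs2 : s ^ 2 = 1 + ‖y‖ ^ 2 := Real.sq_sqrt (by positivity)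
    have hs0 : 0 < s := Real.sqrt_pos.2 (by positivity)
    refine ⟨(WithLp.toLp 2 (Fin.snoc (fun i => y i / s) (-1 / s)) : EuclideanSpace ℝ (Fin (d + 1))), ⟨?_, ?_⟩, ?_⟩
    · rw [mem_sphere_zero_iff_norm]
      exact norm_snoc_eq_one y s hs0 hs2 _ (fun i => by simp) (by simp)
    · intro z hz
      have hzl : 0 < z (Fin.last d) := (hK hz).2
      have h1 : (inner ℝ (gproj d z) y : ℝ) ≤ 1 := hy' z hz
      rw [inner_euclid] at h1
      simp only [gproj, PiLp.toLp_apply] at h1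
      have h2 : ∑ i : Fin d, z i.castSucc * y i ≤ z (Fin.last d) := by
        have h3 : ∑ i : Fin d, z i.castSucc / z (Fin.last d) * y i
            = (∑ i : Fin d, z i.castSucc * y i) / z (Fin.last d) := by
          rw [Finset.sum_div]; exact Finset.sum_congr rfl fun i _ => by ring
        rw [h3, div_le_one hzl] at h1
        exact h1
      rw [inner_euclid, Fin.sum_univ_castSucc]
      simp only [PiLp.toLp_apply, Fin.snoc_castSucc, Fin.snoc_last]
      have h4 : ∑ i : Fin d, y i / s * z i.castSucc + -1 / s * z (Fin.last d)
          = ((∑ i : Fin d, z i.castSucc * y i) - z (Fin.last d)) / s := by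
        rw [sub_div, Finset.sum_div]
        congr 1
        · exact Finset.sum_congr rfl fun i _ => by ring
        · ring
      rw [h4]
      exact div_nonpos_of_nonpos_of_nonneg (by linarith) hs0.le
    · ext i
      simp only [gtproj, PiLp.toLp_apply, Fin.snoc_castSucc, Fin.snoc_last, neg_neg, neg_div]
      field_simp
  · rintro ⟨u, hu, rfl⟩
    rintro x' ⟨x, hx, rfl⟩
    have hxl : 0 < x (Fin.last d) := (hK hx).2
    have hul : u (Fin.last d) < 0 := (hpol hu).2
    rw [inner_euclid]
    have hiu : (inner ℝ u x : ℝ) ≤ 0 := hu.2 x hx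
    rw [inner_euclid, Fin.sum_univ_castSucc] at hiu
    have key : ∑ i : Fin d, x i.castSucc * u i.castSucc ≤ x (Fin.last d) * -u (Fin.last d) := by
      have h5 : ∑ i : Fin d, x i.castSucc * u i.castSucc
          = ∑ i : Fin d, u i.castSucc * x i.castSucc :=
        Finset.sum_congr rfl fun i _ => by ring
      rw [h5]; nlinarith
    have hpos : 0 < x (Fin.last d) * -u (Fin.last d) := mul_pos hxl (by linarith)
    have h6 : ∑ i : Fin d, gproj d x i * gtproj d u i
        = (∑ i : Fin d, x i.castSucc * u i.castSucc) / (x (Fin.last d) * -u (Fin.last d)) := by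
      rw [Finset.sum_div]
      exact Finset.sum_congr rfl fun i _ => by simp only [gproj, gtproj, PiLp.toLp_apply]; rw [div_mul_div_comm]
    rw [h6, div_le_one hpos]
    exact key
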